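/- arXiv:2605.27137 — 3 statements merged into one kernel-verified Lean document; each statement's English description precedes it below -/
import Mathlib

section
/- Let P₁,…,Pₙ and Q₁,…,Qₙ be probability measures with densities f_i, g_i with respect to a common dominating measure, and fix α ∈ (0,1). Then ∏_{i=1}^n ∫ f_i^α g_i^{1-α} dν ≤ exp(−m_α ∑_{i=1}^n h²(f_i,g_i)), where m_α = min(α, 1−α) and h²(f,g) = ∫(√f−√g)² dν is the squared Hellinger distance. -/
open MeasureTheory

section Aux

variable {α : Type*} [MeasurableSpace α] (ν : Measure α)

/-- Integrability of `√f √g`. -/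
lemma sqrt_mul_sqrt_integrable {f g : α → ℝ} (hfm : Measurable f) (hgm : Measurable g)
    (hf0 : ∀ x, 0 ≤ f x) (hg0 : ∀ x, 0 ≤ g x)
    (hfi : Integrable f ν) (hgi : Integrable g ν) :
    Integrable (fun x => Real.sqrt (f x) * Real.sqrt (g x)) ν := by
  refine Integrable.mono' (hfi.add hgi) ?_ (Filter.Eventually.of_forall fun x => ?_)
  · exact ((hfm.sqrt.mul hgm.sqrt)).aestronglyMeasurable
  · have h1 : 0 ≤ Real.sqrt (f x) * Real.sqrt (g x) :=
      mul_nonneg (Real.sqrt_nonneg _) (Real.sqrt_nonneg _)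
    rw [Real.norm_of_nonneg h1]
    simp only [Pi.add_apply]
    nlinarith [Real.sq_sqrt (hf0 x), Real.sq_sqrt (hg0 x),
      sq_nonneg (Real.sqrt (f x) - Real.sqrt (g x)), hf0 x, hg0 x]

/-- The low-exponent Hölder bound: for `0 < b ≤ 1/2`,
`∫ f^b g^{1-b} ≤ ρ^{2b}` where `ρ = ∫ √f √g`. -/
lemma integral_rpow_le_rho {f g : α → ℝ} (hfm : Measurable f) (hgm : Measurable g)
    (hf0 : ∀ x, 0 ≤ f x) (hg0 : ∀ x, 0 ≤ g x)
    (hfi : Integrable f ν) (hgi : Integrable g ν)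
    (hg1 : ∫ x, g x ∂ν = 1) {b : ℝ} (hb0 : 0 < b) (hb : b ≤ 1 / 2) :
    ∫ x, f x ^ b * g x ^ (1 - b) ∂ν
      ≤ (∫ x, Real.sqrt (f x) * Real.sqrt (g x) ∂ν) ^ (2 * b) := by
  set ρ := ∫ x, Real.sqrt (f x) * Real.sqrt (g x) ∂ν with hρ
  have hρ0 : 0 ≤ ρ := integral_nonneg fun x =>
    mul_nonneg (Real.sqrt_nonneg _) (Real.sqrt_nonneg _)
  have hρint := sqrt_mul_sqrt_integrable ν hfm hgm hf0 hg0 hfi hgi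
  rcases eq_or_lt_of_le hb with hb2 | hb2
  · -- b = 1/2
    have e12 : (1:ℝ) - 1 / 2 = 1 / 2 := by norm_num
    have this1 : ∀ x, f x ^ b * g x ^ (1 - b) = Real.sqrt (f x) * Real.sqrt (g x) := by
      intro x
      rw [hb2, e12, Real.sqrt_eq_rpow, Real.sqrt_eq_rpow]
    simp_rw [this1]
    have h2b : 2 * b = 1 := by rw [hb2]; norm_num
    rw [h2b, Real.rpow_one]
  · -- b < 1/2 : use Hölder with p = 1/(2b), q = 1/(1-2b)
    have h1b : 0 ≤ 1 - 2 * b := by linarith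
    have hnn : ∀ x, 0 ≤ f x ^ b * g x ^ (1 - b) := fun x =>
      mul_nonneg (Real.rpow_nonneg (hf0 x) _) (Real.rpow_nonneg (hg0 x) _)
    rw [integral_eq_lintegral_of_nonneg_ae (Filter.Eventually.of_forall hnn)
      (((hfm.pow measurable_const).mul (hgm.pow measurable_const)).aestronglyMeasurable)]
    set U : α → ENNReal := fun x => ENNReal.ofReal (f x)
    set V : α → ENNReal := fun x => ENNReal.ofReal (g x)
    have hUm : Measurable U := hfm.ennreal_ofReal
    have hVm : Measurable V := hgm.ennreal_ofReal
    have hint : ∀ x, ENNReal.ofReal (f x ^ b * g x ^ (1 - b))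
        = (U x * V x) ^ b * (V x) ^ (1 - 2 * b) := by
      intro x
      rw [ENNReal.ofReal_mul (Real.rpow_nonneg (hf0 x) _),
        ← ENNReal.ofReal_rpow_of_nonneg (hf0 x) hb0.le,
        ← ENNReal.ofReal_rpow_of_nonneg (hg0 x) (by linarith : (0:ℝ) ≤ 1 - b)]
      rw [ENNReal.mul_rpow_of_nonneg _ _ hb0.le, mul_assoc,
        ← ENNReal.rpow_add_of_nonneg _ _ hb0.le h1b]
      ring_nf
      rfl
    simp_rw [hint]
    -- Hölder
    have hpq : Real.HolderConjugate (1 / (2 * b)) (1 / (1 - 2 * b)) := by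
      rw [Real.holderConjugate_iff]
      constructor
      · rw [lt_div_iff₀ (by linarith)]; linarith
      · rw [one_div, one_div, inv_inv, inv_inv]; ring
    have hmf : Measurable fun x => (U x * V x) ^ b := (hUm.mul hVm).pow measurable_const
    have hmg : Measurable fun x => (V x) ^ (1 - 2 * b) := hVm.pow measurable_const
    have hH := ENNReal.lintegral_mul_le_Lp_mul_Lq ν hpq hmf.aemeasurable hmg.aemeasurable
    have e1 : ∀ x, ((U x * V x) ^ b) ^ (1 / (2 * b)) = (U x * V x) ^ (1 / 2 : ℝ) := by
      intro x
      rw [← ENNReal.rpow_mul]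
      congr 1
      field_simp
    have e2 : ∀ x, ((V x) ^ (1 - 2 * b)) ^ (1 / (1 - 2 * b)) = V x := by
      intro x
      rw [← ENNReal.rpow_mul]
      rw [mul_one_div_cancel (by linarith), ENNReal.rpow_one]
    simp_rw [e1, e2] at hH
    have e3 : ∀ x, (U x * V x) ^ (1 / 2 : ℝ)
        = ENNReal.ofReal (Real.sqrt (f x) * Real.sqrt (g x)) := by
      intro x
      rw [← ENNReal.ofReal_mul (hf0 x), ENNReal.ofReal_rpow_of_nonneg
        (mul_nonneg (hf0 x) (hg0 x)) (by norm_num)]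
      congr 1
      rw [← Real.sqrt_eq_rpow, Real.sqrt_mul (hf0 x)]
    simp_rw [e3] at hH
    have eρ : ∫⁻ x, ENNReal.ofReal (Real.sqrt (f x) * Real.sqrt (g x)) ∂ν
        = ENNReal.ofReal ρ := by
      rw [← ofReal_integral_eq_lintegral_ofReal hρint (Filter.Eventually.of_forall fun x =>
        mul_nonneg (Real.sqrt_nonneg _) (Real.sqrt_nonneg _))]
    have eV : ∫⁻ x, V x ∂ν = 1 := by
      rw [← ofReal_integral_eq_lintegral_ofReal hgi
        (Filter.Eventually.of_forall hg0), hg1, ENNReal.ofReal_one]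
    rw [eρ, eV, ENNReal.one_rpow, mul_one] at hH
    have hH' : ∫⁻ x, (U x * V x) ^ b * V x ^ (1 - 2 * b) ∂ν
        ≤ ENNReal.ofReal (ρ ^ (2 * b)) := by
      refine hH.trans_eq ?_
      rw [one_div_one_div, ENNReal.ofReal_rpow_of_nonneg hρ0 (by linarith : (0:ℝ) ≤ 2 * b)]
    exact ENNReal.toReal_le_of_le_ofReal (Real.rpow_nonneg hρ0 _) hH'

/-- Per-pair bound. -/
lemma single_bound {f g : α → ℝ} (hfm : Measurable f) (hgm : Measurable g)
    (hf0 : ∀ x, 0 ≤ f x) (hg0 : ∀ x, 0 ≤ g x)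
    (hfi : Integrable f ν) (hgi : Integrable g ν)
    (hf1 : ∫ x, f x ∂ν = 1) (hg1 : ∫ x, g x ∂ν = 1)
    {a : ℝ} (ha0 : 0 < a) (ha1 : a < 1) :
    ∫ x, f x ^ a * g x ^ (1 - a) ∂ν
      ≤ Real.exp (-(min a (1 - a)) * ∫ x, (Real.sqrt (f x) - Real.sqrt (g x)) ^ 2 ∂ν) := by
  set ρ := ∫ x, Real.sqrt (f x) * Real.sqrt (g x) ∂ν with hρ
  have hρ0 : 0 ≤ ρ := integral_nonneg fun x =>
    mul_nonneg (Real.sqrt_nonneg _) (Real.sqrt_nonneg _)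
  have hρint := sqrt_mul_sqrt_integrable ν hfm hgm hf0 hg0 hfi hgi
  set m := min a (1 - a) with hm
  have hm0 : 0 < m := lt_min ha0 (by linarith)
  have hm2 : m ≤ 1 / 2 := by
    rcases le_total a (1 - a) with h | h
    · rw [hm, min_eq_left h]; linarith
    · rw [hm, min_eq_right h]; linarith
  -- step 1 : ∫ f^a g^{1-a} ≤ ρ^{2m}
  have step1 : ∫ x, f x ^ a * g x ^ (1 - a) ∂ν ≤ ρ ^ (2 * m) := by
    rcases le_total a (1 - a) with h | h
    · rw [hm, min_eq_left h]
      exact integral_rpow_le_rho ν hfm hgm hf0 hg0 hfi hgi hg1 ha0 (by linarith)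
    · rw [hm, min_eq_right h]
      have := integral_rpow_le_rho ν hgm hfm hg0 hf0 hgi hfi hf1
        (b := 1 - a) (by linarith) (by linarith)
      have e : ∀ x, g x ^ (1 - a) * f x ^ (1 - (1 - a)) = f x ^ a * g x ^ (1 - a) := by
        intro x; rw [mul_comm]; norm_num
      simp_rw [e] at this
      refine this.trans_eq ?_
      congr 1
      simp_rw [mul_comm (Real.sqrt (g _))]
      rfl
  -- step 2 : Hellinger identity h² = 2 - 2ρ
  have h2eq : ∫ x, (Real.sqrt (f x) - Real.sqrt (g x)) ^ 2 ∂ν = 2 - 2 * ρ := by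
    have e : ∀ x, (Real.sqrt (f x) - Real.sqrt (g x)) ^ 2
        = (f x + g x) - 2 * (Real.sqrt (f x) * Real.sqrt (g x)) := by
      intro x
      have hf := Real.sq_sqrt (hf0 x)
      have hg := Real.sq_sqrt (hg0 x)
      nlinarith [hf, hg]
    simp_rw [e]
    have hadd : Integrable (fun x => f x + g x) ν := hfi.add hgi
    rw [integral_sub hadd (hρint.const_mul 2), integral_add hfi hgi,
      integral_const_mul, hf1, hg1, ← hρ]
    ring
  set h2 := ∫ x, (Real.sqrt (f x) - Real.sqrt (g x)) ^ 2 ∂ν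
  -- step 3 : ρ ^ (2m) ≤ exp (-m h²)
  have hρexp : ρ ≤ Real.exp (ρ - 1) := by
    have := Real.add_one_le_exp (ρ - 1)
    linarith
  have step3 : ρ ^ (2 * m) ≤ Real.exp (-m * h2) := by
    calc ρ ^ (2 * m) ≤ Real.exp (ρ - 1) ^ (2 * m) :=
          Real.rpow_le_rpow hρ0 hρexp (by linarith)
      _ = Real.exp ((ρ - 1) * (2 * m)) := (Real.exp_mul _ _).symm
      _ = Real.exp (-m * h2) := by
          congr 1
          have : h2 = 2 - 2 * ρ := h2eq
          rw [this]; ring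
  exact step1.trans step3

end Aux

/-- Hellinger-transform bound: for densities `f i`, `g i` with respect to `ν` and
`α ∈ (0,1)`, `∏ i ∫ fᵢ^α gᵢ^{1-α} dν ≤ exp(−min(α,1−α) ∑ i h²(fᵢ,gᵢ))`, where
`h²(f,g) = ∫ (√f − √g)² dν` is the squared Hellinger distance. -/
theorem renyi_hellinger_bound {α : Type*} [MeasurableSpace α] (ν : Measure α) (n : ℕ)
    (f g : Fin n → α → ℝ) (a : ℝ) (ha0 : 0 < a) (ha1 : a < 1)
    (hfm : ∀ i, Measurable (f i)) (hgm : ∀ i, Measurable (g i))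
    (hf0 : ∀ i x, 0 ≤ f i x) (hg0 : ∀ i x, 0 ≤ g i x)
    (hfi : ∀ i, Integrable (f i) ν) (hgi : ∀ i, Integrable (g i) ν)
    (hf1 : ∀ i, ∫ x, f i x ∂ν = 1) (hg1 : ∀ i, ∫ x, g i x ∂ν = 1) :
    ∏ i, ∫ x, f i x ^ a * g i x ^ (1 - a) ∂ν
      ≤ Real.exp (-(min a (1 - a)) *
          ∑ i, ∫ x, (Real.sqrt (f i x) - Real.sqrt (g i x)) ^ 2 ∂ν) := by
  have key : ∀ i : Fin n, ∫ x, f i x ^ a * g i x ^ (1 - a) ∂ν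
      ≤ Real.exp (-(min a (1 - a)) *
          ∫ x, (Real.sqrt (f i x) - Real.sqrt (g i x)) ^ 2 ∂ν) := fun i =>
    single_bound ν (hfm i) (hgm i) (hf0 i) (hg0 i) (hfi i) (hgi i) (hf1 i) (hg1 i) ha0 ha1
  calc ∏ i, ∫ x, f i x ^ a * g i x ^ (1 - a) ∂ν
      ≤ ∏ i, Real.exp (-(min a (1 - a)) *
          ∫ x, (Real.sqrt (f i x) - Real.sqrt (g i x)) ^ 2 ∂ν) := by
        refine Finset.prod_le_prod (fun i _ => ?_) (fun i _ => key i)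
        exact integral_nonneg fun x =>
          mul_nonneg (Real.rpow_nonneg (hf0 i x) _) (Real.rpow_nonneg (hg0 i x) _)
    _ = Real.exp (∑ i, -(min a (1 - a)) *
          ∫ x, (Real.sqrt (f i x) - Real.sqrt (g i x)) ^ 2 ∂ν) := by
        rw [Real.exp_sum]
    _ = Real.exp (-(min a (1 - a)) *
          ∑ i, ∫ x, (Real.sqrt (f i x) - Real.sqrt (g i x)) ^ 2 ∂ν) := by
        rw [Finset.mul_sum]
end

section
/- For the logistic cumulant b(η) = log(1+e^η), for every C > 0 there exists c_C > 0 such that for all |η₀| ≤ C and all u ∈ ℝ, the Bregman divergence D_b(η₀+u, η₀) = b(η₀+u) − b(η₀) − b'(η₀)u satisfies D_b(η₀+u, η₀) ≥ c_C u²/(1+|u|). -/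
private lemma mono_aux {f f' : ℝ → ℝ} {a b : ℝ} (hab : a ≤ b)
    (hf : ∀ x, HasDerivAt f (f' x) x)
    (h : ∀ x ∈ Set.Icc a b, 0 ≤ f' x) : f a ≤ f b := by
  have hm : MonotoneOn f (Set.Icc a b) := by
    apply monotoneOn_of_deriv_nonneg (convex_Icc a b)
      (fun x _ => (hf x).continuousAt.continuousWithinAt)
      (fun x hx => ((hf x).differentiableAt).differentiableWithinAt)
    intro x hx
    rw [(hf x).deriv]
    exact h x (interior_subset hx)
  exact hm ⟨le_refl a, hab⟩ ⟨hab, le_refl b⟩ hab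

private lemma hasDerivAt_sig (x : ℝ) :
    HasDerivAt (fun y => Real.exp y / (1 + Real.exp y))
      (Real.exp x / (1 + Real.exp x) ^ 2) x := by
  have hx : (1 : ℝ) + Real.exp x ≠ 0 := by positivity
  have h := (Real.hasDerivAt_exp x).div ((Real.hasDerivAt_exp x).const_add 1) hx
  refine h.congr_deriv ?_
  ring

private lemma hasDerivAt_sig_shift (η₀ t : ℝ) :
    HasDerivAt (fun y => Real.exp (η₀ + y) / (1 + Real.exp (η₀ + y)))
      (Real.exp (η₀ + t) / (1 + Real.exp (η₀ + t)) ^ 2) t := by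
  have h := (hasDerivAt_sig (η₀ + t)).comp t ((hasDerivAt_id t).const_add η₀)
  simpa [Function.comp_def] using h

private lemma hasDerivAt_F (η₀ t : ℝ) :
    HasDerivAt (fun v => Real.log (1 + Real.exp (η₀ + v)) - Real.log (1 + Real.exp η₀)
        - Real.exp η₀ / (1 + Real.exp η₀) * v)
      (Real.exp (η₀ + t) / (1 + Real.exp (η₀ + t)) - Real.exp η₀ / (1 + Real.exp η₀)) t := by
  have hx : (1 : ℝ) + Real.exp (η₀ + t) ≠ 0 := by positivity
  have h1 : HasDerivAt (fun v => Real.log (1 + Real.exp (η₀ + v)))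
      (Real.exp (η₀ + t) / (1 + Real.exp (η₀ + t))) t := by
    have := (((Real.hasDerivAt_exp (η₀ + t)).comp t
      ((hasDerivAt_id t).const_add η₀)).const_add 1).log hx
    simpa using this
  have h2 : HasDerivAt (fun v : ℝ => Real.exp η₀ / (1 + Real.exp η₀) * v)
      (Real.exp η₀ / (1 + Real.exp η₀)) t := by
    simpa using (hasDerivAt_id t).const_mul (Real.exp η₀ / (1 + Real.exp η₀))
  exact (h1.sub_const (Real.log (1 + Real.exp η₀))).sub h2

/-- Lower bound on σ'. -/
private lemma sig_deriv_lb (C η : ℝ) (h : |η| ≤ C + 1) :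
    Real.exp (-(C + 1)) / 4 ≤ Real.exp η / (1 + Real.exp η) ^ 2 := by
  have h1 : Real.exp (-(C + 1)) ≤ Real.exp (-|η|) := Real.exp_le_exp.2 (by linarith)
  have h2 : Real.exp (-|η|) / 4 ≤ Real.exp η / (1 + Real.exp η) ^ 2 := by
    rcases abs_cases η with ⟨he, _⟩ | ⟨he, _⟩
    · rw [he, Real.exp_neg]
      rw [div_le_div_iff₀ (by norm_num) (by positivity)]
      have h3 : (1 : ℝ) ≤ Real.exp η := by
        rw [← Real.exp_zero]; exact Real.exp_le_exp.2 (by linarith [abs_nonneg η, he ▸ abs_nonneg η]) 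
      rw [inv_mul_le_iff₀ (Real.exp_pos η)]
      nlinarith [Real.exp_pos η, sq_nonneg (1 - Real.exp η), sq_nonneg (1 + Real.exp η)]
    · rw [he, neg_neg]
      rw [div_le_div_iff₀ (by norm_num) (by positivity)]
      have h3 : Real.exp η ≤ 1 := by
        rw [← Real.exp_zero]; exact Real.exp_le_exp.2 (by nlinarith [abs_nonneg η])
      nlinarith [Real.exp_pos η,
        mul_nonneg (sub_nonneg.2 h3) (Real.exp_pos η).le,
        mul_nonneg (sub_nonneg.2 h3) (sq_nonneg (Real.exp η))]
  linarith

private noncomputable def Fb (η₀ v : ℝ) : ℝ :=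
  Real.log (1 + Real.exp (η₀ + v)) - Real.log (1 + Real.exp η₀)
    - Real.exp η₀ / (1 + Real.exp η₀) * v

private lemma hasDerivAt_Fb (η₀ t : ℝ) :
    HasDerivAt (Fb η₀)
      (Real.exp (η₀ + t) / (1 + Real.exp (η₀ + t)) - Real.exp η₀ / (1 + Real.exp η₀)) t :=
  hasDerivAt_F η₀ t

private lemma Fb_zero (η₀ : ℝ) : Fb η₀ 0 = 0 := by simp [Fb]

private lemma sig_mono (η₀ : ℝ) {a b : ℝ} (hab : a ≤ b) :
    Real.exp (η₀ + a) / (1 + Real.exp (η₀ + a)) ≤ Real.exp (η₀ + b) / (1 + Real.exp (η₀ + b)) :=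
  mono_aux hab (hasDerivAt_sig_shift η₀) (fun x _ => by positivity)

private lemma sc_near (C η₀ : ℝ) (hη : |η₀| ≤ C) (v : ℝ) (hv : |v| ≤ 1) :
    Real.exp (-(C + 1)) / 4 * v ^ 2 / 2 ≤ Fb η₀ v := by
  obtain ⟨hv1, hv2⟩ := abs_le.1 hv
  set m := Real.exp (-(C + 1)) / 4 with hm
  set s := Real.exp η₀ / (1 + Real.exp η₀) with hs
  set G' : ℝ → ℝ := fun t => Real.exp (η₀ + t) / (1 + Real.exp (η₀ + t)) - s - m * t with hG'def
  have hG : ∀ t, HasDerivAt (fun w => Fb η₀ w - m * w ^ 2 / 2) (G' t) t := by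
    intro t
    have h2 : HasDerivAt (fun w : ℝ => m * w ^ 2 / 2) (m * t) t := by
      have := ((hasDerivAt_pow 2 t).const_mul m).div_const 2
      refine this.congr_deriv ?_; ring
    have := (hasDerivAt_Fb η₀ t).sub h2
    exact this
  have hG' : ∀ t, HasDerivAt G'
      (Real.exp (η₀ + t) / (1 + Real.exp (η₀ + t)) ^ 2 - m) t := by
    intro t
    have h2 : HasDerivAt (fun w : ℝ => m * w) m t := by
      simpa using (hasDerivAt_id t).const_mul m
    exact ((hasDerivAt_sig_shift η₀ t).sub_const s).sub h2
  have hGpp : ∀ t, -1 ≤ t → t ≤ 1 → 0 ≤ Real.exp (η₀ + t) / (1 + Real.exp (η₀ + t)) ^ 2 - m := by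
    intro t h1 h2
    have hab : |η₀ + t| ≤ C + 1 := by
      have := abs_add_le η₀ t
      have ht : |t| ≤ 1 := abs_le.2 ⟨h1, h2⟩
      linarith
    linarith [sig_deriv_lb C (η₀ + t) hab]
  have hG'0 : G' 0 = 0 := by simp [hG'def, hs]
  rcases le_or_gt 0 v with hv0 | hv0
  · have hnn : ∀ t ∈ Set.Icc (0 : ℝ) v, 0 ≤ G' t := by
      intro t ht
      have := mono_aux ht.1 hG' (fun x hx => hGpp x (by linarith [hx.1]) (by linarith [hx.2, ht.2]))
      linarith [hG'0 ▸ this]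
    have := mono_aux hv0 hG hnn
    simp only [Fb_zero] at this
    nlinarith [this]
  · have hnp : ∀ t ∈ Set.Icc v (0 : ℝ), G' t ≤ 0 := by
      intro t ht
      have := mono_aux ht.2 hG' (fun x hx => hGpp x (by linarith [hx.1, ht.1]) (by linarith [hx.2]))
      linarith [hG'0 ▸ this]
    have := mono_aux (f := fun w => -(Fb η₀ w - m * w ^ 2 / 2)) (f' := fun t => -(G' t))
      hv0.le (fun t => (hG t).neg) (fun t ht => by simpa using neg_nonneg.2 (hnp t ht))
    simp only [Fb_zero] at this
    nlinarith [this]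

private lemma lin_pos (C η₀ : ℝ) (hη : |η₀| ≤ C) (u : ℝ) (hu : 1 ≤ u) :
    Real.exp (-(C + 1)) / 8 * u ≤ Fb η₀ u := by
  set s := Real.exp η₀ / (1 + Real.exp η₀) with hs
  set s1 : ℝ := Real.exp (η₀ + 1) / (1 + Real.exp (η₀ + 1)) - s with hs1
  have hH : ∀ t, HasDerivAt (fun w => Fb η₀ w - s1 * w)
      (Real.exp (η₀ + t) / (1 + Real.exp (η₀ + t)) - s - s1) t := fun t =>
    (hasDerivAt_Fb η₀ t).sub (by simpa using (hasDerivAt_id t).const_mul s1)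
  have step1 : Fb η₀ 1 - s1 * 1 ≤ Fb η₀ u - s1 * u :=
    mono_aux hu hH (fun t ht => by
      have := sig_mono η₀ (show (1 : ℝ) ≤ t from ht.1)
      simp only [hs1]; linarith)
  have hK : ∀ t, HasDerivAt (fun w => s1 * w - Fb η₀ w)
      (s1 - (Real.exp (η₀ + t) / (1 + Real.exp (η₀ + t)) - s)) t := fun t =>
    (by simpa using (hasDerivAt_id t).const_mul s1 :
      HasDerivAt (fun w : ℝ => s1 * w) s1 t).sub (hasDerivAt_Fb η₀ t)
  have step2 : s1 * 0 - Fb η₀ 0 ≤ s1 * 1 - Fb η₀ 1 :=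
    mono_aux zero_le_one hK (fun t ht => by
      have := sig_mono η₀ (show t ≤ (1 : ℝ) from ht.2)
      simp only [hs1]; linarith)
  rw [Fb_zero] at step2
  have h1 : Real.exp (-(C + 1)) / 4 * 1 ^ 2 / 2 ≤ Fb η₀ 1 := sc_near C η₀ hη 1 (by norm_num)
  have hA : Fb η₀ 1 ≤ s1 := by linarith
  nlinarith [mul_nonneg (sub_nonneg.2 hA) (sub_nonneg.2 hu),
    mul_nonneg (show (0:ℝ) ≤ Fb η₀ 1 - Real.exp (-(C+1))/8 by linarith) (sub_nonneg.2 hu)]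

private lemma lin_neg (C η₀ : ℝ) (hη : |η₀| ≤ C) (u : ℝ) (hu : u ≤ -1) :
    Real.exp (-(C + 1)) / 8 * (-u) ≤ Fb η₀ u := by
  set s := Real.exp η₀ / (1 + Real.exp η₀) with hs
  set s1 : ℝ := Real.exp (η₀ + (-1)) / (1 + Real.exp (η₀ + (-1))) - s with hs1
  have hH : ∀ t, HasDerivAt (fun w => -(Fb η₀ w - s1 * w))
      (-(Real.exp (η₀ + t) / (1 + Real.exp (η₀ + t)) - s - s1)) t := fun t =>
    ((hasDerivAt_Fb η₀ t).sub (by simpa using (hasDerivAt_id t).const_mul s1)).neg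
  have step1 : -(Fb η₀ u - s1 * u) ≤ -(Fb η₀ (-1) - s1 * (-1)) :=
    mono_aux (f := fun w => -(Fb η₀ w - s1 * w))
      (f' := fun t => -(Real.exp (η₀ + t) / (1 + Real.exp (η₀ + t)) - s - s1)) hu hH (fun t ht => by
      have := sig_mono η₀ (show t ≤ (-1 : ℝ) from ht.2)
      simp only [hs1]; linarith)
  have hK : ∀ t, HasDerivAt (fun w => Fb η₀ w - s1 * w)
      (Real.exp (η₀ + t) / (1 + Real.exp (η₀ + t)) - s - s1) t := fun t =>
    (hasDerivAt_Fb η₀ t).sub (by simpa using (hasDerivAt_id t).const_mul s1)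
  have step2 : Fb η₀ (-1) - s1 * (-1) ≤ Fb η₀ 0 - s1 * 0 :=
    mono_aux (by norm_num) hK (fun t ht => by
      have := sig_mono η₀ (show (-1 : ℝ) ≤ t from ht.1)
      simp only [hs1]; linarith)
  rw [Fb_zero] at step2
  have h1 : Real.exp (-(C + 1)) / 4 * (-1) ^ 2 / 2 ≤ Fb η₀ (-1) :=
    sc_near C η₀ hη (-1) (by norm_num)
  -- A := Fb(-1) + s1 ≤ 0 ; Fb u ≥ Fb(-1) + s1*(u+1)
  have hA : Fb η₀ (-1) + s1 ≤ 0 := by linarith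
  nlinarith [mul_nonneg (neg_nonneg.2 hA) (show (0:ℝ) ≤ -(u+1) by linarith),
    mul_nonneg (show (0:ℝ) ≤ Fb η₀ (-1) - Real.exp (-(C+1))/8 by linarith)
      (show (0:ℝ) ≤ -u by linarith)]

/-- Truncated-quadratic lower bound for the logistic Bregman divergence: for
`b(η) = log(1+e^η)` and every `C > 0` there is `c_C > 0` such that for all `|η₀| ≤ C`
and all `u`, `b(η₀+u) − b(η₀) − b'(η₀)u ≥ c_C u²/(1+|u|)`, where
`b'(η₀) = e^{η₀}/(1+e^{η₀})`. -/
theorem logistic_bregman_lower (C : ℝ) (hC : 0 < C) :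
    ∃ c : ℝ, 0 < c ∧
      ∀ η₀ u : ℝ, |η₀| ≤ C →
        c * u ^ 2 / (1 + |u|) ≤
          Real.log (1 + Real.exp (η₀ + u)) - Real.log (1 + Real.exp η₀)
            - Real.exp η₀ / (1 + Real.exp η₀) * u := by
  refine ⟨Real.exp (-(C + 1)) / 8, by positivity, fun η₀ u hη => ?_⟩
  have h1u : (0 : ℝ) < 1 + |u| := by positivity
  show Real.exp (-(C + 1)) / 8 * u ^ 2 / (1 + |u|) ≤ Fb η₀ u
  rcases le_or_gt |u| 1 with h | h
  · have hsc := sc_near C η₀ hη u h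
    have hFb0 : 0 ≤ Fb η₀ u := le_trans (by positivity) hsc
    rw [div_le_iff₀ h1u]
    nlinarith [mul_nonneg hFb0 (abs_nonneg u)]
  · rcases le_or_gt 0 u with hu0 | hu0
    · have hu1 : 1 ≤ u := by rw [abs_of_nonneg hu0] at h; linarith
      have hl := lin_pos C η₀ hη u hu1
      rw [div_le_iff₀ h1u, abs_of_nonneg hu0]
      nlinarith [mul_le_mul_of_nonneg_right hl (show (0:ℝ) ≤ 1 + u by linarith),
        mul_nonneg (show (0:ℝ) ≤ Real.exp (-(C+1))/8 by positivity) (show (0:ℝ) ≤ u by linarith)]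
    · have hu1 : u ≤ -1 := by rw [abs_of_neg hu0] at h; linarith
      have hl := lin_neg C η₀ hη u hu1
      rw [div_le_iff₀ h1u, abs_of_neg hu0]
      nlinarith [mul_le_mul_of_nonneg_right hl (show (0:ℝ) ≤ 1 + -u by linarith),
        mul_nonneg (show (0:ℝ) ≤ Real.exp (-(C+1))/8 by positivity) (show (0:ℝ) ≤ -u by linarith)]
end

section
/- Fix α ∈ (0,1) and a strictly convex function b: ℝ → ℝ with bounded second-derivative log-derivative |(log b'')'| ≤ 1. For every r > 0 there exist constants 0 < c_{α,r} < C_{α,r} such that for all η₀ ∈ ℝ and |u| ≤ r, the Jensen gap J_α(η₀+u, η₀) = α b(η₀+u) + (1−α) b(η₀) − b(α(η₀+u) + (1−α)η₀) satisfies c_{α,r} b''(η₀) u² ≤ J_α(η₀+u, η₀) ≤ C_{α,r} b''(η₀) u². -/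
/-- Auxiliary: convexity inequality from everywhere second derivative nonneg on a convex set. -/
lemma jensen_aux (a : ℝ) (ha0 : 0 < a) (ha1 : a < 1)
    (f f1 f2 : ℝ → ℝ)
    (hf1 : ∀ η, HasDerivAt f (f1 η) η)
    (hf2 : ∀ η, HasDerivAt f1 (f2 η) η)
    (s : Set ℝ) (hs : Convex ℝ s)
    (hnn : ∀ x ∈ s, 0 ≤ f2 x)
    (x y : ℝ) (hx : x ∈ s) (hy : y ∈ s) :
    f (a * x + (1 - a) * y) ≤ a * f x + (1 - a) * f y := by
  have hconv : ConvexOn ℝ s f := by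
    refine convexOn_of_hasDerivWithinAt2_nonneg hs
      (fun z hz => (hf1 z).continuousAt.continuousWithinAt)
      (fun z hz => (hf1 z).hasDerivWithinAt)
      (fun z hz => (hf2 z).hasDerivWithinAt)
      (fun z hz => hnn z (interior_subset hz))
  have := hconv.2 hx hy (le_of_lt ha0) (by linarith : (0:ℝ) ≤ 1 - a) (by ring)
  simpa only [smul_eq_mul] using this

/-- Two-sided quadratic comparison for the Jensen gap of a strictly convex cumulant:
fix `α ∈ (0,1)` and `b` twice differentiable with second derivative `b'' > 0` whose
logarithm has derivative bounded by 1 (encoded as `log ∘ b''` being 1-Lipschitz).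
Then for every `r > 0` there are `0 < c < C` (depending only on `α` and `r`) such that
for all `η₀` and `|u| ≤ r`,
`c b''(η₀) u² ≤ α b(η₀+u) + (1−α) b(η₀) − b(α(η₀+u)+(1−α)η₀) ≤ C b''(η₀) u²`. -/
theorem jensen_gap_quadratic (a : ℝ) (ha0 : 0 < a) (ha1 : a < 1)
    (b b1 b2 : ℝ → ℝ)
    (hb1 : ∀ η, HasDerivAt b (b1 η) η)
    (hb2 : ∀ η, HasDerivAt b1 (b2 η) η)
    (hpos : ∀ η, 0 < b2 η)
    (hlip : LipschitzWith 1 fun η => Real.log (b2 η)) :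
    ∀ r : ℝ, 0 < r → ∃ c C : ℝ, 0 < c ∧ c < C ∧
      ∀ η₀ u : ℝ, |u| ≤ r →
        c * b2 η₀ * u ^ 2 ≤
            a * b (η₀ + u) + (1 - a) * b η₀ - b (a * (η₀ + u) + (1 - a) * η₀) ∧
          a * b (η₀ + u) + (1 - a) * b η₀ - b (a * (η₀ + u) + (1 - a) * η₀)
            ≤ C * b2 η₀ * u ^ 2 := by
  intro r hr
  refine ⟨a * (1 - a) / 2 * Real.exp (-r), a * (1 - a) / 2 * Real.exp r, ?_, ?_, ?_⟩
  · have : 0 < 1 - a := by linarith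
    positivity
  · have h1 : Real.exp (-r) < Real.exp r := Real.exp_lt_exp.2 (by linarith)
    have h0 : 0 < 1 - a := by linarith
    have h2 : 0 < a * (1 - a) / 2 := by positivity
    nlinarith
  intro η₀ u hu
  set B := b2 η₀ with hB
  have hBpos : 0 < B := hpos η₀
  -- bounds on b2 on the interval
  have hbound : ∀ z ∈ Set.Icc (η₀ - r) (η₀ + r),
      Real.exp (-r) * B ≤ b2 z ∧ b2 z ≤ Real.exp r * B := by
    intro z hz
    have hdz : dist z η₀ ≤ r := by
      rw [Real.dist_eq, abs_le]
      constructor <;> [linarith [hz.1]; linarith [hz.2]]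
    have hld : |Real.log (b2 z) - Real.log B| ≤ r := by
      have := hlip.dist_le_mul z η₀
      rw [Real.dist_eq, Real.dist_eq] at this
      calc |Real.log (b2 z) - Real.log B| ≤ 1 * |z - η₀| := this
        _ ≤ r := by rw [one_mul]; exact (abs_le.2 ⟨by linarith [hz.1], by linarith [hz.2]⟩)
    rw [abs_le] at hld
    have hz1 : Real.log B - r ≤ Real.log (b2 z) := by linarith [hld.1]
    have hz2 : Real.log (b2 z) ≤ Real.log B + r := by linarith [hld.2]
    constructor
    · have : Real.exp (Real.log B - r) ≤ Real.exp (Real.log (b2 z)) := Real.exp_le_exp.2 hz1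
      rw [Real.exp_log (hpos z), Real.exp_sub, Real.exp_log hBpos] at this
      rw [Real.exp_neg, ← div_eq_inv_mul]
      exact this
    · have : Real.exp (Real.log (b2 z)) ≤ Real.exp (Real.log B + r) := Real.exp_le_exp.2 hz2
      rwa [Real.exp_log (hpos z), Real.exp_add, Real.exp_log hBpos, mul_comm] at this
  have hsconv : Convex ℝ (Set.Icc (η₀ - r) (η₀ + r)) := convex_Icc _ _
  have hxmem : η₀ + u ∈ Set.Icc (η₀ - r) (η₀ + r) := by
    rw [abs_le] at hu
    constructor <;> [linarith [hu.1]; linarith [hu.2]]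
  have hymem : η₀ ∈ Set.Icc (η₀ - r) (η₀ + r) := by
    constructor <;> linarith
  -- quadratic derivative helpers
  have hq : ∀ (k t : ℝ), HasDerivAt (fun t => k / 2 * t ^ 2) (k * t) t := by
    intro k t
    have := (hasDerivAt_pow 2 t).const_mul (k / 2)
    refine this.congr_deriv ?_
    simp [pow_one]; ring
  have hl : ∀ (k t : ℝ), HasDerivAt (fun t => k * t) k t := by
    intro k t
    simpa using (hasDerivAt_id t).const_mul k
  constructor
  · -- lower bound: f t = b t - m/2 t^2 is convex on the interval
    have key := jensen_aux a ha0 ha1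
      (fun t => b t - Real.exp (-r) * B / 2 * t ^ 2) (fun t => b1 t - Real.exp (-r) * B * t)
      (fun t => b2 t - Real.exp (-r) * B)
      (fun t => (hb1 t).sub (hq _ t)) (fun t => (hb2 t).sub (hl _ t))
      _ hsconv (fun z hz => sub_nonneg.2 (hbound z hz).1)
      (η₀ + u) η₀ hxmem hymem
    nlinarith [key, sq_nonneg u]
  · -- upper bound: f t = M/2 t^2 - b t is convex on the interval
    have key := jensen_aux a ha0 ha1
      (fun t => Real.exp r * B / 2 * t ^ 2 - b t) (fun t => Real.exp r * B * t - b1 t)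
      (fun t => Real.exp r * B - b2 t)
      (fun t => (hq _ t).sub (hb1 t)) (fun t => (hl _ t).sub (hb2 t))
      _ hsconv (fun z hz => sub_nonneg.2 (hbound z hz).2)
      (η₀ + u) η₀ hxmem hymem
    nlinarith [key, sq_nonneg u]
end
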